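/- Let ρ be a 2×2 density matrix with det ρ > 0 (equivalently, ρ is positive definite, hence mixed), and let P be a rank-one orthogonal projection (a pure state). For x ∈ [0,1] define the hedged state σ_x = (1−x)·P + (x/2)·I. Then there exists ε > 0 such that for all x with 0 < x < ε, the root fidelity satisfies Tr √(√ρ σ_x √ρ) > Tr √(√ρ P √ρ). (In words: moving a pure estimate slightly toward the maximally mixed state strictly increases its fidelity with any fixed mixed true state, so a pure state cannot maximize fidelity against a mixed state.) -/

import Mathlib

open Matrix MeasureTheory
open scoped ComplexOrder Classical

/-- A density matrix of dimension `d`: a complex `d × d` positive semidefinite matrix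
of trace 1. -/
def IsDensityMatrix {d : ℕ} (ρ : Matrix (Fin d) (Fin d) ℂ) : Prop :=
  ρ.PosSemidef ∧ ρ.trace = 1

/-- A pure state: a density matrix that is a rank-one orthogonal projection,
i.e. it satisfies `ρ * ρ = ρ` and has rank one. -/
def IsPureState {d : ℕ} (ρ : Matrix (Fin d) (Fin d) ℂ) : Prop :=
  IsDensityMatrix ρ ∧ ρ * ρ = ρ ∧ ρ.rank = 1

/-- The positive semidefinite square root `√A` of a positive semidefinite matrix,
extended to a total function (junk value `0` on non-PSD matrices). -/
noncomputable def psqrt {d : ℕ} (A : Matrix (Fin d) (Fin d) ℂ) :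
    Matrix (Fin d) (Fin d) ℂ :=
  if h : A.PosSemidef then
    h.1.eigenvectorUnitary.1 * diagonal ((↑) ∘ (√·) ∘ h.1.eigenvalues) *
      (star h.1.eigenvectorUnitary : Matrix (Fin d) (Fin d) ℂ)
  else 0

/-- The square root appearing in `psqrt`. -/
noncomputable def Matrix.PosSemidef.sqrt {d : ℕ} {A : Matrix (Fin d) (Fin d) ℂ}
    (h : A.PosSemidef) : Matrix (Fin d) (Fin d) ℂ :=
  h.1.eigenvectorUnitary.1 * diagonal ((↑) ∘ (√·) ∘ h.1.eigenvalues) *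
    (star h.1.eigenvectorUnitary : Matrix (Fin d) (Fin d) ℂ)

lemma Matrix.PosSemidef.posSemidef_sqrt {d : ℕ} {A : Matrix (Fin d) (Fin d) ℂ}
    (h : A.PosSemidef) : h.sqrt.PosSemidef := by
  have hD : (diagonal ((↑) ∘ (√·) ∘ h.1.eigenvalues) : Matrix (Fin d) (Fin d) ℂ).PosSemidef :=
    PosSemidef.diagonal (fun i => by
      simpa using Complex.zero_le_real.2 (Real.sqrt_nonneg (h.1.eigenvalues i)))
  have := hD.mul_mul_conjTranspose_same h.1.eigenvectorUnitary.1
  simpa [Matrix.PosSemidef.sqrt, Matrix.star_eq_conjTranspose] using this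

lemma Matrix.PosSemidef.sqrt_mul_self {d : ℕ} {A : Matrix (Fin d) (Fin d) ℂ}
    (h : A.PosSemidef) : h.sqrt * h.sqrt = A := by
  have hU : (star h.1.eigenvectorUnitary : Matrix (Fin d) (Fin d) ℂ) *
      h.1.eigenvectorUnitary.1 = 1 := Unitary.coe_star_mul_self _
  have hDD : (diagonal ((↑) ∘ (√·) ∘ h.1.eigenvalues) : Matrix (Fin d) (Fin d) ℂ) *
      diagonal ((↑) ∘ (√·) ∘ h.1.eigenvalues) = diagonal (RCLike.ofReal ∘ h.1.eigenvalues) := by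
    rw [diagonal_mul_diagonal]
    congr 1
    funext i
    simp only [Function.comp_apply]
    rw [← Complex.ofReal_mul, Real.mul_self_sqrt (h.eigenvalues_nonneg i)]
    rfl
  conv_rhs => rw [h.1.spectral_theorem, Unitary.conjStarAlgAut_apply]
  simp only [Matrix.PosSemidef.sqrt]
  rw [show ∀ a b c e f g : Matrix (Fin d) (Fin d) ℂ, a * b * c * (e * f * g)
      = a * (b * (c * e) * f) * g from fun a b c e f g => by simp only [Matrix.mul_assoc],
    hU, Matrix.mul_one, hDD]

/-- The root fidelity `√F(ρ,σ) = Tr √(√ρ σ √ρ)` (a real number, taken as the real part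
of the trace, which is real for density matrices). -/
noncomputable def rootFidelity {d : ℕ} (ρ σ : Matrix (Fin d) (Fin d) ℂ) : ℝ :=
  ((psqrt (psqrt ρ * σ * psqrt ρ)).trace).re

lemma nonneg_eq_re {z : ℂ} (h : 0 ≤ z) : z = (z.re : ℂ) ∧ 0 ≤ z.re := by
  rw [Complex.nonneg_iff] at h
  exact ⟨Complex.ext rfl (by simpa using h.2.symm), h.1⟩

lemma psd_trace_nonneg {d : ℕ} {A : Matrix (Fin d) (Fin d) ℂ} (hA : A.PosSemidef) :
    0 ≤ A.trace := by
  exact hA.trace_nonneg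

lemma psd_det_nonneg {d : ℕ} {A : Matrix (Fin d) (Fin d) ℂ} (hA : A.PosSemidef) :
    0 ≤ A.det := by
  rw [hA.1.det_eq_prod_eigenvalues]
  exact Finset.prod_nonneg fun i _ => by
    simpa using Complex.zero_le_real.2 (hA.eigenvalues_nonneg i)

lemma psd_smul_real {d : ℕ} {A : Matrix (Fin d) (Fin d) ℂ} (hA : A.PosSemidef)
    {c : ℝ} (hc : 0 ≤ c) : ((c : ℂ) • A).PosSemidef := by
  constructor
  · unfold Matrix.IsHermitian
    rw [conjTranspose_smul, hA.1.eq]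
    congr 1
    simp [Complex.star_def, Complex.conj_ofReal]
  · exact (hA.smul (a := (c : ℂ)) (Complex.zero_le_real.2 hc)).2

lemma trace_sq_eq (A : Matrix (Fin 2) (Fin 2) ℂ) :
    A.trace ^ 2 = (A * A).trace + 2 * A.det := by
  simp [Matrix.trace, Matrix.det_fin_two, Matrix.mul_apply, Fin.sum_univ_two, Matrix.diag]
  ring

lemma trace_psqrt_re {M : Matrix (Fin 2) (Fin 2) ℂ} (hM : M.PosSemidef) :
    (psqrt M).trace.re = Real.sqrt (M.trace.re + 2 * Real.sqrt M.det.re) := by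
  rw [psqrt, dif_pos hM]
  change hM.sqrt.trace.re = _
  set S := hM.sqrt with hS
  have hSpsd : S.PosSemidef := hM.posSemidef_sqrt
  have hSS : S * S = M := hM.sqrt_mul_self
  obtain ⟨htr, htr0⟩ := nonneg_eq_re (psd_trace_nonneg hSpsd)
  obtain ⟨hdt, hdt0⟩ := nonneg_eq_re (psd_det_nonneg hSpsd)
  have hdet : M.det.re = S.det.re ^ 2 := by
    have : M.det = S.det * S.det := by rw [← hSS, Matrix.det_mul]
    rw [this, hdt]
    simp [sq]
  have hkey : S.trace.re ^ 2 = M.trace.re + 2 * S.det.re := by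
    have h2 := trace_sq_eq S
    rw [hSS, htr, hdt] at h2
    have h3 := congrArg Complex.re h2
    push_cast at h3
    simpa [← Complex.ofReal_pow] using h3
  rw [hdet, Real.sqrt_sq hdt0, ← hkey, Real.sqrt_sq htr0]

/-- Let `ρ` be a `2 × 2` density matrix with `det ρ > 0` (i.e. positive
definite, hence mixed) and `P` a rank-one orthogonal projection (a pure state). For
`x ∈ [0,1]` let `σ_x = (1 − x) P + (x/2) I` be the hedged state. Then there is `ε > 0`
such that for all `0 < x < ε`, `Tr √(√ρ σ_x √ρ) > Tr √(√ρ P √ρ)`: moving a pure estimate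
slightly toward the maximally mixed state strictly increases fidelity with the mixed
true state. -/
theorem hedging_pure_estimate_increases_fidelity
    (ρ : Matrix (Fin 2) (Fin 2) ℂ) (hρ : IsDensityMatrix ρ) (hdet : 0 < ρ.det.re)
    (P : Matrix (Fin 2) (Fin 2) ℂ)
    (hP2 : P * P = P) (hPherm : P.IsHermitian) (hPtr : P.trace = 1)
    (σ : ℝ → Matrix (Fin 2) (Fin 2) ℂ)
    (hσ : ∀ x : ℝ,
      σ x = (1 - (x : ℂ)) • P + ((x : ℂ) / 2) • (1 : Matrix (Fin 2) (Fin 2) ℂ)) :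
    ∃ ε > 0, ∀ x : ℝ, 0 < x → x < ε → rootFidelity ρ P < rootFidelity ρ (σ x) := by
  obtain ⟨hρpsd, hρtr⟩ := hρ
  set d : ℝ := ρ.det.re with hd
  -- the square root of ρ
  have hpsρ : psqrt ρ = hρpsd.sqrt := dif_pos hρpsd
  set R : Matrix (Fin 2) (Fin 2) ℂ := hρpsd.sqrt with hR
  have hRpsd : R.PosSemidef := hρpsd.posSemidef_sqrt
  have hRH : Rᴴ = R := hRpsd.1
  have hRR : R * R = ρ := hρpsd.sqrt_mul_self
  have hρdetC : ρ.det = (d : ℂ) := (nonneg_eq_re (psd_det_nonneg hρpsd)).1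
  -- P is PSD
  have hPpsd : P.PosSemidef := by
    have : P = Pᴴ * P := by rw [hPherm.eq, hP2]
    rw [this]; exact posSemidef_conjTranspose_mul_self P
  -- det P = 0
  have hPdet : P.det = 0 := by
    have h := trace_sq_eq P
    rw [hP2, hPtr] at h
    linear_combination -h / 2
  -- the sandwiched matrices
  have sandwich_psd : ∀ {A : Matrix (Fin 2) (Fin 2) ℂ}, A.PosSemidef →
      (R * A * R).PosSemidef := by
    intro A hA
    have := hA.mul_mul_conjTranspose_same R
    rwa [hRH] at this
  have sandwich_det : ∀ A : Matrix (Fin 2) (Fin 2) ℂ, (R * A * R).det = ρ.det * A.det := by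
    intro A
    rw [Matrix.det_mul, Matrix.det_mul, ← hRR, Matrix.det_mul]
    ring
  -- t := Tr(R P R)
  set t : ℝ := (R * P * R).trace.re with htdef
  have hMP : (R * P * R).PosSemidef := sandwich_psd hPpsd
  have ht0 : 0 ≤ t := ((nonneg_eq_re (psd_trace_nonneg hMP)).2)
  -- t ≤ 1
  have ht1 : t ≤ 1 := by
    have hQpsd : (1 - P).PosSemidef := by
      have h1 : (1 - P) = (1 - P)ᴴ * (1 - P) := by
        rw [conjTranspose_sub, conjTranspose_one, hPherm.eq]
        rw [Matrix.mul_sub, Matrix.sub_mul, Matrix.sub_mul, hP2]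
        simp
      rw [h1]; exact posSemidef_conjTranspose_mul_self _
    have h2 : (R * (1 - P) * R).trace = ρ.trace - (R * P * R).trace := by
      rw [Matrix.mul_sub, Matrix.sub_mul, Matrix.mul_one, hRR, Matrix.trace_sub]
    have h3 := (nonneg_eq_re (psd_trace_nonneg (sandwich_psd hQpsd))).2
    rw [h2] at h3
    simp only [Complex.sub_re, hρtr] at h3
    simp only [Complex.one_re] at h3
    linarith
  -- root fidelity with P
  have hfidP : rootFidelity ρ P = Real.sqrt t := by
    rw [rootFidelity, hpsρ, trace_psqrt_re hMP, sandwich_det, hPdet]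
    simp [← htdef]
  refine ⟨min d 1, lt_min hdet one_pos, fun x hx hxε => ?_⟩
  have hxd : x < d := lt_of_lt_of_le hxε (min_le_left _ _)
  have hx1 : x < 1 := lt_of_lt_of_le hxε (min_le_right _ _)
  -- σ x is PSD
  have hσx : σ x = (1 - (x : ℂ)) • P + ((x : ℂ) / 2) • 1 := hσ x
  have hσpsd : (σ x).PosSemidef := by
    rw [hσx]
    have h1 : ((1 : ℂ) - (x : ℂ)) = (((1 - x : ℝ)) : ℂ) := by push_cast; ring
    have h2 : ((x : ℂ) / 2) = (((x / 2 : ℝ)) : ℂ) := by push_cast; ring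
    rw [h1, h2]
    exact (psd_smul_real hPpsd (by linarith)).add
      (psd_smul_real Matrix.PosSemidef.one (by linarith))
  -- determinant of σ x
  have hσdet : (σ x).det = ((x : ℂ) / 2) * (1 - (x : ℂ) / 2) := by
    have h := trace_sq_eq (σ x)
    have htr : (σ x).trace = 1 := by
      rw [hσx, Matrix.trace_add, Matrix.trace_smul, Matrix.trace_smul, hPtr,
        Matrix.trace_one]
      simp only [smul_eq_mul, Fintype.card_fin, Nat.cast_ofNat, mul_one]
      ring
    have hsq : ((σ x) * (σ x)).trace
        = (1 - (x : ℂ)) ^ 2 + (x : ℂ) * (1 - (x : ℂ)) + (x : ℂ) ^ 2 / 2 := by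
      rw [hσx]
      simp only [Matrix.add_mul, Matrix.mul_add, Matrix.smul_mul, Matrix.mul_smul,
        hP2, Matrix.mul_one, Matrix.one_mul, Matrix.trace_add, Matrix.trace_smul,
        smul_smul, hPtr, Matrix.trace_one]
      simp only [smul_eq_mul, Fintype.card_fin, Nat.cast_ofNat, mul_one]
      ring
    rw [htr, hsq] at h
    linear_combination -h / 2
  -- trace of R σx R
  have hMσ : (R * σ x * R).PosSemidef := sandwich_psd hσpsd
  have hMσtr : (R * σ x * R).trace.re = (1 - x) * t + x / 2 := by
    have hexp : R * σ x * R = (1 - (x : ℂ)) • (R * P * R) + ((x : ℂ) / 2) • ρ := by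
      rw [hσx]
      rw [Matrix.mul_add, Matrix.add_mul, Matrix.mul_smul, Matrix.smul_mul,
        Matrix.mul_smul, Matrix.smul_mul, Matrix.mul_one, hRR]
    have htC : (R * P * R).trace = (t : ℂ) := (nonneg_eq_re (psd_trace_nonneg hMP)).1
    rw [hexp, Matrix.trace_add, Matrix.trace_smul, Matrix.trace_smul, hρtr, htC]
    have : (1 - (x : ℂ)) • (t : ℂ) + ((x : ℂ) / 2) • (1 : ℂ)
        = (((1 - x) * t + x / 2 : ℝ) : ℂ) := by
      simp only [smul_eq_mul]
      push_cast
      ring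
    rw [this, Complex.ofReal_re]
  have hMσdet : (R * σ x * R).det.re = d * ((x / 2) * (1 - x / 2)) := by
    rw [sandwich_det, hσdet, hρdetC]
    have : (d : ℂ) * ((x : ℂ) / 2 * (1 - (x : ℂ) / 2))
        = ((d * ((x / 2) * (1 - x / 2)) : ℝ) : ℂ) := by push_cast; ring
    rw [this, Complex.ofReal_re]
  -- root fidelity with σ x
  have hfidσ : rootFidelity ρ (σ x)
      = Real.sqrt ((1 - x) * t + x / 2 + 2 * Real.sqrt (d * ((x / 2) * (1 - x / 2)))) := by
    rw [rootFidelity, hpsρ, trace_psqrt_re hMσ, hMσtr, hMσdet]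
  rw [hfidP, hfidσ]
  apply Real.sqrt_lt_sqrt ht0
  -- the arithmetic heart
  have key1 : x < Real.sqrt (d * x) := by
    rw [Real.lt_sqrt hx.le]
    nlinarith
  have key2 : Real.sqrt (d * x) / 2 ≤ Real.sqrt (d * ((x / 2) * (1 - x / 2))) := by
    have h14 : Real.sqrt ((1 : ℝ) / 4) = 1 / 2 := by
      rw [show (1 / 4 : ℝ) = (1 / 2) ^ 2 by norm_num, Real.sqrt_sq (by norm_num)]
    have h1 : Real.sqrt (d * x / 4) = Real.sqrt (d * x) / 2 := by
      rw [show d * x / 4 = (d * x) * (1 / 4) by ring,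
        Real.sqrt_mul (mul_nonneg hdet.le hx.le), h14]
      ring
    rw [← h1]
    apply Real.sqrt_le_sqrt
    nlinarith [mul_nonneg (mul_nonneg hdet.le hx.le) (sub_nonneg.2 hx1.le)]
  have hxt : x * t ≤ x * 1 := by nlinarith
  linarith [key1, key2, hxt]
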